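/- (Subdifferentiation of convex optimal value functions.) Let X, Y be real vector spaces, F : X ⇉ Y a set-valued mapping with convex graph, and φ : X × Y → ℝ ∪ {+∞} a convex function. Define the optimal value function μ(x) := inf{φ(x,y) | y ∈ F(x)}, and assume: core(gph(F)) ≠ ∅, core(epi(φ)) ≠ ∅, μ(x) > −∞ for all x ∈ X, and the qualification condition core(dom(φ)) ∩ core(gph(F)) ≠ ∅. Let x̄ ∈ dom(μ) and let ȳ ∈ F(x̄) satisfy μ(x̄) = φ(x̄,ȳ). Then ∂μ(x̄) = ⋃_{(f,g) ∈ ∂φ(x̄,ȳ)} (f + D*F(x̄,ȳ)(g)), i.e., h ∈ ∂μ(x̄) iff there exist linear f : X → ℝ and g : Y → ℝ with (f,g) ∈ ∂φ(x̄,ȳ) and h − f ∈ D*F(x̄,ȳ)(g). -/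

import Mathlib

/-- The algebraic core of a set `Ω` in a real vector space. -/
def algCore {X : Type*} [AddCommGroup X] [Module ℝ X] (Ω : Set X) : Set X :=
  {x | x ∈ Ω ∧ ∀ v : X, ∃ δ > (0 : ℝ), ∀ t : ℝ, |t| < δ → x + t • v ∈ Ω}

/-- The graph of a set-valued mapping `F : X ⇉ Y`. -/
def gph {X Y : Type*} (F : X → Set Y) : Set (X × Y) := {p | p.2 ∈ F p.1}

/-- The coderivative of a set-valued mapping `F` at `(xb, yb) ∈ gph F`. -/
def coderiv {X Y : Type*} [AddCommGroup X] [Module ℝ X] [AddCommGroup Y] [Module ℝ Y]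
    (F : X → Set Y) (xb : X) (yb : Y) (g : Y →ₗ[ℝ] ℝ) : Set (X →ₗ[ℝ] ℝ) :=
  {f | yb ∈ F xb ∧ ∀ x : X, ∀ y ∈ F x, f (x - xb) - g (y - yb) ≤ 0}

/-- The epigraph of an extended-real-valued function. -/
def epi {X : Type*} (φ : X → EReal) : Set (X × ℝ) :=
  {p | φ p.1 ≤ (p.2 : EReal)}

/-- The subdifferential of an extended-real-valued function at `xb`. -/
def subdiff {X : Type*} [AddCommGroup X] [Module ℝ X] (φ : X → EReal) (xb : X) :
    Set (X →ₗ[ℝ] ℝ) :=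
  {f | ∀ x : X, φ xb + ((f (x - xb) : ℝ) : EReal) ≤ φ x}

/-- The subdifferential of a convex function of two variables at `(xb, yb)`,
with subgradients identified with pairs of linear functionals. -/
def subdiff2 {X Y : Type*} [AddCommGroup X] [Module ℝ X] [AddCommGroup Y] [Module ℝ Y]
    (φ : X × Y → EReal) (xb : X) (yb : Y) :
    Set ((X →ₗ[ℝ] ℝ) × (Y →ₗ[ℝ] ℝ)) :=
  {fg | ∀ u : X × Y, φ (xb, yb) + ((fg.1 (u.1 - xb) + fg.2 (u.2 - yb) : ℝ) : EReal) ≤ φ u}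

/-- The optimal value (marginal) function `μ(x) = inf {φ(x,y) | y ∈ F(x)}`. -/
noncomputable def optVal {X Y : Type*} (F : X → Set Y) (φ : X × Y → EReal) : X → EReal :=
  fun x => ⨅ y ∈ F x, φ (x, y)


section SepAux
open Set
variable {W : Type*} [AddCommGroup W] [Module ℝ W]

lemma algCore_convex {A : Set W} (hA : Convex ℝ A) : Convex ℝ (algCore A) := by
  intro x hx y hy a b ha hb hab
  refine ⟨hA hx.1 hy.1 ha hb hab, fun v => ?_⟩
  obtain ⟨δ₁, hδ₁, h₁⟩ := hx.2 v
  obtain ⟨δ₂, hδ₂, h₂⟩ := hy.2 v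
  refine ⟨min δ₁ δ₂, lt_min hδ₁ hδ₂, fun t ht => ?_⟩
  have e : a • (x + t • v) + b • (y + t • v) = a • x + b • y + (a + b) • (t • v) := by module
  rw [hab, one_smul] at e
  exact e ▸ hA (h₁ t (ht.trans_le (min_le_left _ _))) (h₂ t (ht.trans_le (min_le_right _ _)))
    ha hb hab

lemma algCore_segment {A : Set W} (hA : Convex ℝ A) {a₀ a : W} (ha₀ : a₀ ∈ algCore A)
    (ha : a ∈ A) {t : ℝ} (ht0 : 0 < t) (ht1 : t ≤ 1) : (1 - t) • a + t • a₀ ∈ algCore A := by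
  refine ⟨hA ha ha₀.1 (by linarith) ht0.le (by ring), fun v => ?_⟩
  obtain ⟨δ, hδ, hδA⟩ := ha₀.2 v
  refine ⟨t * δ, by positivity, fun s hs => ?_⟩
  have hst : |s / t| < δ := by
    rw [abs_div, abs_of_pos ht0, div_lt_iff₀ ht0]
    linarith [hs, mul_comm t δ]
  have h1 : a₀ + (s / t) • v ∈ A := hδA _ hst
  have hts : t * (s / t) = s := by field_simp
  have e : (1 - t) • a + t • (a₀ + (s / t) • v) = (1 - t) • a + t • a₀ + (t * (s/t)) • v := by
    module
  rw [hts] at e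
  exact e ▸ hA ha h1 (by linarith) ht0.le (by ring)

lemma algCore_mem_algCore {A : Set W} (hA : Convex ℝ A) {a : W} (ha : a ∈ algCore A) :
    a ∈ algCore (algCore A) := by
  refine ⟨ha, fun v => ?_⟩
  obtain ⟨δ, hδ, hδA⟩ := ha.2 v
  refine ⟨δ / 2, by positivity, fun s hs => ?_⟩
  refine ⟨hδA s (by linarith), fun w => ?_⟩
  obtain ⟨δ', hδ', hδ'A⟩ := ha.2 w
  refine ⟨δ' / 2, by positivity, fun u hu => ?_⟩
  have h1 : a + (2 * s) • v ∈ A := hδA _ (by rw [abs_mul, abs_two]; linarith)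
  have h2 : a + (2 * u) • w ∈ A := hδ'A _ (by rw [abs_mul, abs_two]; linarith)
  have e : (1/2 : ℝ) • (a + (2*s) • v) + (1/2 : ℝ) • (a + (2*u) • w) = a + s • v + u • w := by
    module
  exact e ▸ hA h1 h2 (by norm_num) (by norm_num) (by norm_num)

lemma alg_separation {A B : Set W} (hA : Convex ℝ A) (hB : Convex ℝ B)
    {a₀ : W} (ha₀ : a₀ ∈ algCore A) (hBne : B.Nonempty)
    (hdisj : ∀ a ∈ algCore A, a ∉ B) :
    ∃ Λ : W →ₗ[ℝ] ℝ, (∀ b ∈ B, ∀ a ∈ A, Λ b ≤ Λ a) ∧ ∀ b ∈ B, Λ b < Λ a₀ := by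
  obtain ⟨b₀, hb₀⟩ := hBne
  set d₀ : W := a₀ - b₀ with hd₀
  set D' : Set W := {w : W | ∃ a ∈ algCore A, ∃ b ∈ B, w = a - b - d₀} with hD'
  have h0D' : (0 : W) ∈ D' := ⟨a₀, ha₀, b₀, hb₀, by rw [hd₀]; abel⟩
  have hD'conv : Convex ℝ D' := by
    rintro x ⟨a₁, ha₁, b₁, hb₁, rfl⟩ y ⟨a₂, ha₂, b₂, hb₂, rfl⟩ s t hs ht hst
    refine ⟨s • a₁ + t • a₂, algCore_convex hA ha₁ ha₂ hs ht hst,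
      s • b₁ + t • b₂, hB hb₁ hb₂ hs ht hst, ?_⟩
    have e : s • (a₁ - b₁ - d₀) + t • (a₂ - b₂ - d₀)
        = (s • a₁ + t • a₂) - (s • b₁ + t • b₂) - (s + t) • d₀ := by module
    rw [hst, one_smul] at e
    exact e
  have hD'core : ∀ w ∈ D', w ∈ algCore D' := by
    rintro w ⟨a, ha, b, hb, rfl⟩
    refine ⟨⟨a, ha, b, hb, rfl⟩, fun v => ?_⟩
    obtain ⟨δ, hδpos, hδ⟩ := (algCore_mem_algCore hA ha).2 v
    exact ⟨δ, hδpos, fun t ht => ⟨a + t • v, hδ t ht, b, hb, by abel⟩⟩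
  have habs : Absorbent ℝ D' := by
    intro x
    obtain ⟨δ, hδpos, hδ⟩ := (hD'core 0 h0D').2 x
    refine absorbs_iff_norm.2 ⟨2 / δ, fun c hc => ?_⟩
    have hc0 : c ≠ 0 := by
      intro h; rw [h, norm_zero] at hc
      have : (0:ℝ) < 2 / δ := by positivity
      linarith
    rw [Set.singleton_subset_iff, mem_smul_set_iff_inv_smul_mem₀ hc0]
    have h1 : |c⁻¹| < δ := by
      rw [abs_inv, ← Real.norm_eq_abs]
      have h2 : (2:ℝ) / δ ≤ ‖c‖ := hc
      have h3 : (0:ℝ) < ‖c‖ := lt_of_lt_of_le (by positivity) h2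
      rw [inv_lt_iff_one_lt_mul₀ h3]
      have : 2 / δ * δ ≤ ‖c‖ * δ := by nlinarith
      rw [div_mul_cancel₀] at this
      · linarith
      · exact hδpos.ne'
    simpa using hδ c⁻¹ h1
  set q : W → ℝ := gauge D' with hq
  set z : W := -d₀ with hz
  have hzne : z ≠ 0 := by
    intro h
    have h2 : d₀ = 0 := by rwa [hz, neg_eq_zero] at h
    rw [hd₀, sub_eq_zero] at h2
    exact hdisj a₀ ha₀ (h2 ▸ hb₀)
  have hzD' : z ∉ D' := by
    rintro ⟨a, ha, b, hb, hab⟩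
    have h2 : a - b = 0 := by
      rw [hz] at hab
      have h3 := congrArg (· + d₀) hab
      simpa using h3.symm
    exact hdisj a ha (sub_eq_zero.1 h2 ▸ hb)
  have hqz : 1 ≤ gauge D' z := by
    by_contra hlt
    push_neg at hlt
    exact hzD' (gauge_lt_one_subset_self hD'conv h0D' habs hlt)
  have hlt1 : ∀ x ∈ D', gauge D' x < 1 := by
    intro x hx
    obtain ⟨δ, hδpos, hδ⟩ := (hD'core x hx).2 x
    have htpos : 0 < min (δ/2) 1 := lt_min (by linarith) one_pos
    have hmem : (1 + min (δ/2) 1) • x ∈ D' := by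
      have h1 := hδ (min (δ/2) 1)
        (by rw [abs_of_pos htpos]; exact (min_le_left _ _).trans_lt (by linarith))
      have e : x + (min (δ/2) 1) • x = (1 + min (δ/2) 1) • x := by module
      rwa [e] at h1
    have h1 : gauge D' ((1 + min (δ/2) 1) • x) ≤ 1 := gauge_le_one_of_mem hmem
    rw [gauge_smul_of_nonneg (by positivity : (0:ℝ) ≤ 1 + min (δ/2) 1), smul_eq_mul] at h1
    nlinarith [gauge_nonneg (s := D') x, mul_nonneg htpos.le (gauge_nonneg (s := D') x)]
  set f : W →ₗ.[ℝ] ℝ := LinearPMap.mkSpanSingleton z (gauge D' z) hzne with hfdef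
  have hfle : ∀ x : f.domain, f x ≤ gauge D' x := by
    rintro ⟨x, hx⟩
    obtain ⟨c, rfl⟩ := Submodule.mem_span_singleton.1 hx
    rw [LinearPMap.mkSpanSingleton'_apply]
    rcases le_or_gt 0 c with hc | hc
    · rw [gauge_smul_of_nonneg hc, RingHom.id_apply]
    · have h1 : c • gauge D' z ≤ 0 := by
        rw [smul_eq_mul]
        exact mul_nonpos_iff.2 (Or.inr ⟨hc.le, gauge_nonneg _⟩)
      exact h1.trans (gauge_nonneg _)
  obtain ⟨Λ₀, hΛeq, hΛle⟩ := exists_extension_of_le_sublinear f (gauge D')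
    (fun c hc x => gauge_smul_of_nonneg hc.le x) (gauge_add_le hD'conv habs) hfle
  have hΛz : Λ₀ z = gauge D' z := by
    have h1 := hΛeq ⟨z, Submodule.mem_span_singleton_self z⟩
    exact h1.trans (LinearPMap.mkSpanSingleton_apply _ _ _ _)
  have hD'lt : ∀ x ∈ D', Λ₀ x < 1 := fun x hx => (hΛle x).trans_lt (hlt1 x hx)
  have hdlt : ∀ a ∈ algCore A, ∀ b ∈ B, Λ₀ a < Λ₀ b := by
    intro a ha b hb
    have h1 : Λ₀ (a - b - d₀) < 1 := hD'lt _ ⟨a, ha, b, hb, rfl⟩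
    have h2 : Λ₀ (a - b - d₀) = Λ₀ a - Λ₀ b + Λ₀ z := by
      rw [hz, map_neg, map_sub, map_sub]; ring
    rw [h2, hΛz] at h1
    linarith
  refine ⟨-Λ₀, fun b hb a ha => ?_, fun b hb => ?_⟩
  swap
  · simp only [LinearMap.neg_apply, neg_lt_neg_iff]
    exact hdlt a₀ ha₀ b hb
  simp only [LinearMap.neg_apply, neg_le_neg_iff]
  by_contra hcon
  push_neg at hcon
  set ε := Λ₀ a - Λ₀ b with hε
  have hεpos : 0 < ε := sub_pos.2 hcon
  set c := Λ₀ a - Λ₀ a₀ with hc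
  set t := min 1 (ε / (2 * (|c| + 1))) with ht
  have htpos : 0 < t := lt_min one_pos (by positivity)
  have ht1 : t ≤ 1 := min_le_left _ _
  have hmem := algCore_segment hA ha₀ ha htpos ht1
  have hstrict := hdlt _ hmem b hb
  have hval : Λ₀ ((1 - t) • a + t • a₀) = Λ₀ a - t * c := by
    rw [map_add, map_smul, map_smul, smul_eq_mul, smul_eq_mul, hc]; ring
  have htc : t * c ≤ ε / 2 := by
    have h1 : t ≤ ε / (2 * (|c| + 1)) := min_le_right _ _
    have h2 : t * c ≤ t * |c| := mul_le_mul_of_nonneg_left (le_abs_self c) htpos.le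
    have h3 : t * |c| ≤ (ε / (2 * (|c| + 1))) * (|c| + 1) :=
      mul_le_mul h1 (by linarith [abs_nonneg c]) (abs_nonneg c) (by positivity)
    have h4 : (ε / (2 * (|c| + 1))) * (|c| + 1) = ε / 2 := by
      field_simp
    linarith
  rw [hval] at hstrict
  rw [hε] at hεpos htc
  nlinarith [hstrict, htc, hεpos]

end SepAux

theorem subdifferential_optimal_value {X Y : Type*} [AddCommGroup X] [Module ℝ X]
    [AddCommGroup Y] [Module ℝ Y]
    (F : X → Set Y) (φ : X × Y → EReal)
    (hφbot : ∀ u : X × Y, φ u ≠ ⊥)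
    (hFconv : Convex ℝ (gph F)) (hφconv : Convex ℝ (epi φ))
    (hFcore : (algCore (gph F)).Nonempty) (hφcore : (algCore (epi φ)).Nonempty)
    (hμbot : ∀ x : X, optVal F φ x ≠ ⊥)
    (hqc : (algCore {u : X × Y | φ u ≠ ⊤} ∩ algCore (gph F)).Nonempty)
    (xb : X) (hxb : optVal F φ xb ≠ ⊤)
    (yb : Y) (hyb : yb ∈ F xb) (hmin : optVal F φ xb = φ (xb, yb)) :
    subdiff (optVal F φ) xb
      = {h | ∃ (f : X →ₗ[ℝ] ℝ) (g : Y →ₗ[ℝ] ℝ),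
          (f, g) ∈ subdiff2 φ xb yb ∧ h - f ∈ coderiv F xb yb g} := by
  have hr0 : optVal F φ xb ≠ ⊥ := hμbot xb
  set r : ℝ := (φ (xb, yb)).toReal with hrdef
  have hφne_top : φ (xb, yb) ≠ ⊤ := hmin ▸ hxb
  have hφr : φ (xb, yb) = (r : EReal) := (EReal.coe_toReal hφne_top (hφbot _)).symm
  have hμr : optVal F φ xb = (r : EReal) := hmin.trans hφr
  have hle : ∀ x : X, ∀ y ∈ F x, optVal F φ x ≤ φ (x, y) := by
    intro x y hy
    exact iInf₂_le y hy
  ext h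
  simp only [Set.mem_setOf_eq]
  constructor
  · intro hh
    have hh' : ∀ x : X, optVal F φ xb + ((h (x - xb) : ℝ) : EReal) ≤ optVal F φ x := hh
    have hkey : ∀ u : X × Y, u ∈ gph F → ((r + h (u.1 - xb) : ℝ) : EReal) ≤ φ u := by
      intro u hu
      have h1 := hh' u.1
      rw [hμr] at h1
      have h2 : ((r : EReal) + ((h (u.1 - xb) : ℝ) : EReal)) ≤ φ (u.1, u.2) :=
        le_trans h1 (hle u.1 u.2 hu)
      rw [← EReal.coe_add] at h2
      simpa using h2
    set A : Set ((X × Y) × ℝ) :=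
      {p | φ ((xb, yb) + p.1) ≤ ((r + h p.1.1 + p.2 : ℝ) : EReal)} with hAdef
    set B : Set ((X × Y) × ℝ) := {p | (xb, yb) + p.1 ∈ gph F ∧ p.2 ≤ 0} with hBdef
    have hAconv : Convex ℝ A := by
      rintro p hp q hq s t hs ht hst
      have hp' : (((xb, yb) + p.1, r + h p.1.1 + p.2) : (X × Y) × ℝ) ∈ epi φ := hp
      have hq' : (((xb, yb) + q.1, r + h q.1.1 + q.2) : (X × Y) × ℝ) ∈ epi φ := hq
      have hcomb := hφconv hp' hq' hs ht hst
      have e1 : s • ((((xb, yb) + p.1, r + h p.1.1 + p.2)) : (X × Y) × ℝ)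
          + t • ((((xb, yb) + q.1, r + h q.1.1 + q.2)) : (X × Y) × ℝ)
          = ((xb, yb) + (s • p + t • q).1,
             r + h (s • p + t • q).1.1 + (s • p + t • q).2) := by
        apply Prod.ext
        · show s • ((xb, yb) + p.1) + t • ((xb, yb) + q.1) = (xb, yb) + (s • p.1 + t • q.1)
          have e : s • ((xb, yb) + p.1) + t • ((xb, yb) + q.1)
              = (s + t) • ((xb, yb) : X × Y) + (s • p.1 + t • q.1) := by module
          rw [e, hst, one_smul]
        · show s * (r + h p.1.1 + p.2) + t * (r + h q.1.1 + q.2)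
            = r + h (s • p.1.1 + t • q.1.1) + (s * p.2 + t * q.2)
          rw [map_add, map_smul, map_smul, smul_eq_mul, smul_eq_mul]
          linear_combination r * hst
      rw [e1] at hcomb
      exact hcomb
    obtain ⟨⟨u₀, α₀⟩, hu₀⟩ := hφcore
    set a₀ : (X × Y) × ℝ := (u₀ - (xb, yb), α₀ - r - h (u₀.1 - xb)) with ha₀def
    have ha₀ : a₀ ∈ algCore A := by
      constructor
      · show φ ((xb, yb) + (u₀ - (xb, yb)))
          ≤ ((r + h (u₀.1 - xb) + (α₀ - r - h (u₀.1 - xb)) : ℝ) : EReal)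
        have e : (xb, yb) + (u₀ - (xb, yb)) = u₀ := by abel
        have e3 : r + h (u₀.1 - xb) + (α₀ - r - h (u₀.1 - xb)) = α₀ := by ring
        rw [e, e3]
        exact hu₀.1
      · rintro ⟨v, s⟩
        obtain ⟨δ, hδpos, hδ⟩ := hu₀.2 (v, s + h v.1)
        refine ⟨δ, hδpos, fun t ht => ?_⟩
        have h1 : φ (u₀ + t • v) ≤ ((α₀ + t * (s + h v.1) : ℝ) : EReal) := hδ t ht
        show φ ((xb, yb) + (u₀ - (xb, yb) + t • v))
          ≤ ((r + h (u₀.1 - xb + t • v.1) + (α₀ - r - h (u₀.1 - xb) + t * s) : ℝ) : EReal)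
        have e1 : (xb, yb) + (u₀ - (xb, yb) + t • v) = u₀ + t • v := by abel
        have e2 : r + h (u₀.1 - xb + t • v.1) + (α₀ - r - h (u₀.1 - xb) + t * s)
            = α₀ + t * (s + h v.1) := by
          rw [map_add, map_smul, smul_eq_mul]
          ring
        rw [e1, e2]
        exact h1
    have hBconv : Convex ℝ B := by
      rintro p ⟨hp1, hp2⟩ q ⟨hq1, hq2⟩ s t hs ht hst
      constructor
      · have hcomb := hFconv hp1 hq1 hs ht hst
        have e : s • ((xb, yb) + p.1) + t • ((xb, yb) + q.1)
            = (xb, yb) + (s • p + t • q).1 := by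
          show _ = (xb, yb) + (s • p.1 + t • q.1)
          have e' : s • ((xb, yb) + p.1) + t • ((xb, yb) + q.1)
              = (s + t) • ((xb, yb) : X × Y) + (s • p.1 + t • q.1) := by module
          rw [e', hst, one_smul]
        rwa [e] at hcomb
      · show s * p.2 + t * q.2 ≤ 0
        nlinarith [hp2, hq2, hs, ht]
    have hBne : B.Nonempty := by
      refine ⟨0, ?_, le_refl 0⟩
      show (xb, yb) + (0 : X × Y) ∈ gph F
      rw [add_zero]
      exact hyb
    have hdisj : ∀ p ∈ algCore A, p ∉ B := by
      rintro p hp ⟨hpB1, hpB2⟩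
      obtain ⟨δ, hδpos, hδ⟩ := hp.2 (((0 : X × Y), (-1 : ℝ)))
      have h1 : p + (δ/2) • (((0 : X × Y), (-1 : ℝ))) ∈ A :=
        hδ (δ/2) (by rw [abs_of_pos (by linarith)]; linarith)
      have h2 : φ ((xb, yb) + p.1) ≤ ((r + h p.1.1 + (p.2 - δ/2) : ℝ) : EReal) := by
        have h1' : φ ((xb, yb) + (p.1 + (δ/2) • (0 : X × Y)))
            ≤ ((r + h (p.1.1 + (δ/2) • (0 : X)) + (p.2 + (δ/2) * (-1)) : ℝ) : EReal) := h1
        rw [smul_zero, add_zero, smul_zero, add_zero] at h1'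
        have e : r + h p.1.1 + (p.2 + δ/2 * (-1)) = r + h p.1.1 + (p.2 - δ/2) := by ring
        rw [e] at h1'
        exact h1'
      have h3 := hkey ((xb, yb) + p.1) hpB1
      have h5 : ((xb, yb) + p.1).1 - xb = p.1.1 := by
        show xb + p.1.1 - xb = p.1.1
        abel
      rw [h5] at h3
      have h6 : (r + h p.1.1 : ℝ) ≤ (r + h p.1.1 + (p.2 - δ/2) : ℝ) := by
        exact_mod_cast h3.trans h2
      linarith
    obtain ⟨Λ, hsep, hstrict⟩ := alg_separation hAconv hBconv ha₀ hBne hdisj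
    have h00A : (0 : (X × Y) × ℝ) ∈ A := by
      show φ ((xb, yb) + (0 : X × Y)) ≤ ((r + h (0 : X) + (0 : ℝ) : ℝ) : EReal)
      rw [add_zero, map_zero, add_zero, add_zero, hφr]
    have h00B : (0 : (X × Y) × ℝ) ∈ B := by
      refine ⟨?_, le_refl 0⟩
      show (xb, yb) + (0 : X × Y) ∈ gph F
      rw [add_zero]; exact hyb
    have hBle : ∀ b ∈ B, Λ b ≤ 0 := by
      intro b hb
      have := hsep b hb 0 h00A
      rwa [map_zero] at this
    have hAge : ∀ a ∈ A, 0 ≤ Λ a := by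
      intro a ha
      have := hsep 0 h00B a ha
      rwa [map_zero] at this
    have hpos : 0 < Λ a₀ := by
      have := hstrict 0 h00B
      rwa [map_zero] at this
    set β : ℝ := Λ ((0 : X × Y), (1 : ℝ)) with hβdef
    have hdec : ∀ (w : X × Y) (t : ℝ), Λ (w, t) = Λ (w, 0) + t * β := by
      intro w t
      have e : ((w, t) : (X × Y) × ℝ) = (w, (0:ℝ)) + t • ((0 : X × Y), (1:ℝ)) := by
        apply Prod.ext
        · show w = w + t • (0 : X × Y)
          rw [smul_zero, add_zero]
        · show t = 0 + t * 1
          ring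
      rw [e, map_add, map_smul, smul_eq_mul]
    have hzero : Λ ((0 : X × Y), (0 : ℝ)) = 0 := map_zero Λ
    have hβ : 0 ≤ β := by
      have hb : (((0 : X × Y), (-1 : ℝ)) : (X × Y) × ℝ) ∈ B := by
        refine ⟨?_, by norm_num⟩
        show (xb, yb) + (0 : X × Y) ∈ gph F
        rw [add_zero]; exact hyb
      have h1 := hBle _ hb
      rw [hdec, hzero] at h1
      linarith
    have hAmem : ∀ w : X × Y, φ ((xb, yb) + w) ≠ ⊤ →
        ((w, (φ ((xb, yb) + w)).toReal - r - h w.1) : (X × Y) × ℝ) ∈ A := by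
      intro w hw
      show φ ((xb, yb) + w)
        ≤ ((r + h w.1 + ((φ ((xb, yb) + w)).toReal - r - h w.1) : ℝ) : EReal)
      have e : r + h w.1 + ((φ ((xb, yb) + w)).toReal - r - h w.1)
          = (φ ((xb, yb) + w)).toReal := by ring
      rw [e, EReal.coe_toReal hw (hφbot _)]
    have hBmem : ∀ w : X × Y, (xb, yb) + w ∈ gph F →
        ((w, (0 : ℝ)) : (X × Y) × ℝ) ∈ B := fun w hw => ⟨hw, le_refl 0⟩
    have hβne : β ≠ 0 := by
      intro hβ0
      obtain ⟨u_q, hq1, hq2⟩ := hqc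
      have hM0 : ∀ v : X × Y, Λ (v, 0) = 0 := by
        intro v
        obtain ⟨δ₁, hδ₁, hd1⟩ := hq1.2 v
        obtain ⟨δ₂, hδ₂, hd2⟩ := hq2.2 v
        have key : ∀ t : ℝ, |t| < min δ₁ δ₂ → Λ (u_q - (xb, yb) + t • v, 0) = 0 := by
          intro t ht
          have e : (xb, yb) + (u_q - (xb, yb) + t • v) = u_q + t • v := by abel
          have hgF : (xb, yb) + (u_q - (xb, yb) + t • v) ∈ gph F := by
            rw [e]
            exact hd2 t (ht.trans_le (min_le_right _ _))
          have hnt : φ ((xb, yb) + (u_q - (xb, yb) + t • v)) ≠ ⊤ := by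
            rw [e]
            exact hd1 t (ht.trans_le (min_le_left _ _))
          have hle1 : Λ (u_q - (xb, yb) + t • v, 0) ≤ 0 := hBle _ (hBmem _ hgF)
          have hge1 : 0 ≤ Λ (u_q - (xb, yb) + t • v, 0) := by
            have h1 := hAge _ (hAmem _ hnt)
            rw [hdec, hβ0, mul_zero, add_zero] at h1
            exact h1
          linarith
        have hδm : 0 < min δ₁ δ₂ := lt_min hδ₁ hδ₂
        have h0 := key 0 (by rw [abs_zero]; exact hδm)
        have h1 := key (min δ₁ δ₂ / 2) (by rw [abs_of_pos (by linarith)]; linarith)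
        have e0 : u_q - (xb, yb) + (0 : ℝ) • v = u_q - (xb, yb) := by
          rw [zero_smul, add_zero]
        rw [e0] at h0
        have e1 : ((u_q - (xb, yb) + (min δ₁ δ₂ / 2) • v, (0:ℝ)) : (X × Y) × ℝ)
            = (u_q - (xb, yb), (0:ℝ)) + (min δ₁ δ₂ / 2) • ((v, (0:ℝ)) : (X × Y) × ℝ) := by
          apply Prod.ext
          · rfl
          · show (0 : ℝ) = 0 + (min δ₁ δ₂ / 2) * 0
            ring
        rw [e1, map_add, map_smul, smul_eq_mul, h0, zero_add] at h1
        have := mul_eq_zero.1 h1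
        rcases this with hc | hc
        · linarith
        · exact hc
      have : Λ a₀ = 0 := by
        have e : a₀ = (a₀.1, a₀.2) := rfl
        rw [e, hdec, hM0, hβ0, mul_zero, add_zero]
      linarith
    have hβpos : 0 < β := lt_of_le_of_ne hβ (Ne.symm hβne)
    set N : (X × Y) →ₗ[ℝ] ℝ := Λ.comp (LinearMap.inl ℝ (X × Y) ℝ) with hNdef
    have hNval : ∀ w : X × Y, N w = Λ (w, 0) := fun w => rfl
    set M : (X × Y) →ₗ[ℝ] ℝ := -(β⁻¹ • N) with hMdef
    have hMval : ∀ w : X × Y, M w = -(β⁻¹ * Λ (w, 0)) := by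
      intro w
      rw [hMdef]
      simp [hNval]
    have hI : ∀ w : X × Y, ((r + h w.1 + M w : ℝ) : EReal) ≤ φ ((xb, yb) + w) := by
      intro w
      by_cases hw : φ ((xb, yb) + w) = ⊤
      · rw [hw]; exact le_top
      · have hA1 := hAge _ (hAmem w hw)
        rw [hdec] at hA1
        have hM : M w ≤ (φ ((xb, yb) + w)).toReal - r - h w.1 := by
          rw [hMval]
          have h2 : 0 ≤ β⁻¹ * (Λ (w, 0) + ((φ ((xb, yb) + w)).toReal - r - h w.1) * β) :=
            mul_nonneg (inv_pos.2 hβpos).le hA1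
          have h3 : β⁻¹ * (Λ (w, 0) + ((φ ((xb, yb) + w)).toReal - r - h w.1) * β)
              = β⁻¹ * Λ (w, 0) + ((φ ((xb, yb) + w)).toReal - r - h w.1) := by
            field_simp
          rw [h3] at h2
          linarith
        have hfin : (r + h w.1 + M w : ℝ) ≤ (φ ((xb, yb) + w)).toReal := by linarith
        calc ((r + h w.1 + M w : ℝ) : EReal)
            ≤ (((φ ((xb, yb) + w)).toReal : ℝ) : EReal) := EReal.coe_le_coe_iff.2 hfin
          _ = φ ((xb, yb) + w) := EReal.coe_toReal hw (hφbot _)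
    have hII : ∀ w : X × Y, (xb, yb) + w ∈ gph F → 0 ≤ M w := by
      intro w hw
      have h1 := hBle _ (hBmem w hw)
      rw [hMval]
      have : 0 ≤ -(Λ (w, 0)) := by linarith
      have h2 : 0 ≤ β⁻¹ * (-(Λ (w, 0))) := mul_nonneg (by positivity) this
      linarith [h2]
    set HX : (X × Y) →ₗ[ℝ] ℝ := h.comp (LinearMap.fst ℝ X Y) with hHXdef
    set L : (X × Y) →ₗ[ℝ] ℝ := M + HX with hLdef
    have hLval : ∀ w : X × Y, L w = M w + h w.1 := fun w => rfl
    set f : X →ₗ[ℝ] ℝ := L.comp (LinearMap.inl ℝ X Y) with hfdef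
    set g : Y →ₗ[ℝ] ℝ := L.comp (LinearMap.inr ℝ X Y) with hgdef
    have hfg : ∀ w : X × Y, f w.1 + g w.2 = L w := by
      intro w
      show L (w.1, 0) + L (0, w.2) = L w
      rw [← map_add]
      congr 1
      apply Prod.ext
      · show w.1 + 0 = w.1
        rw [add_zero]
      · show (0 : Y) + w.2 = w.2
        rw [zero_add]
    refine ⟨f, g, ?_, hyb, ?_⟩
    · intro u
      show φ (xb, yb) + ((f (u.1 - xb) + g (u.2 - yb) : ℝ) : EReal) ≤ φ u
      rw [hφr]
      have hfgu : f (u.1 - xb) + g (u.2 - yb) = L (u - (xb, yb)) := hfg (u - (xb, yb))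
      have h1 := hI (u - (xb, yb))
      have e : (xb, yb) + (u - (xb, yb)) = u := by abel
      rw [e] at h1
      rw [hfgu, hLval]
      have e2 : ((r : ℝ) : EReal) + ((M (u - (xb, yb)) + h (u - (xb, yb)).1 : ℝ) : EReal)
          = ((r + h (u - (xb, yb)).1 + M (u - (xb, yb)) : ℝ) : EReal) := by
        rw [← EReal.coe_add]
        exact congrArg _ (by ring)
      rw [e2]
      exact h1
    · intro x y hy
      set w : X × Y := (x - xb, y - yb) with hwdef
      have hgF : (xb, yb) + w ∈ gph F := by
        have e : (xb, yb) + w = (x, y) := by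
          apply Prod.ext
          · show xb + (x - xb) = x
            abel
          · show yb + (y - yb) = y
            abel
        rw [e]
        exact hy
      have h2 := hII w hgF
      have hfgw : f (x - xb) + g (y - yb) = L w := hfg w
      rw [hLval] at hfgw
      have e3 : (h - f) (x - xb) - g (y - yb) = -(M w) := by
        rw [LinearMap.sub_apply]
        have hw1 : (w : X × Y).1 = x - xb := rfl
        rw [hw1] at hfgw
        linarith [hfgw]
      rw [e3]
      linarith
  · rintro ⟨f, g, hfg2, hyb', hcod⟩
    intro x
    show optVal F φ xb + ((h (x - xb) : ℝ) : EReal) ≤ optVal F φ x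
    rw [hμr]
    refine le_iInf₂ fun y hy => ?_
    have h1 := hcod x y hy
    rw [LinearMap.sub_apply] at h1
    have h2 := hfg2 (x, y)
    rw [hφr] at h2
    have h3 : (r + h (x - xb) : ℝ) ≤ (r + (f (x - xb) + g (y - yb)) : ℝ) := by linarith
    calc ((r : ℝ) : EReal) + ((h (x - xb) : ℝ) : EReal)
        = ((r + h (x - xb) : ℝ) : EReal) := (EReal.coe_add _ _).symm
      _ ≤ ((r + (f (x - xb) + g (y - yb)) : ℝ) : EReal) := EReal.coe_le_coe_iff.2 h3
      _ = ((r : ℝ) : EReal) + ((f (x - xb) + g (y - yb) : ℝ) : EReal) := EReal.coe_add _ _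
      _ ≤ φ (x, y) := h2
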